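/- Let c ≥ 2 be an integer, let G be a finite simple undirected graph on a vertex set V of size n in which every vertex has degree at least n/c − 1, and let α be a natural number satisfying 2^c·α < n/c − 1. Then the equivalence relation ~_α on V has at most c equivalence classes. -/

import Mathlib

open Finset

/-- Number of edges of `G` with one endpoint in `S` and the other in `T`
(for disjoint `S`, `T`, each such edge is counted exactly once as an ordered pair). -/
def crossEdges {V : Type*} [Fintype V] [DecidableEq V] (G : SimpleGraph V)
    [DecidableRel G.Adj] (S T : Finset V) : ℕ :=
  ((S ×ˢ T).filter fun p => G.Adj p.1 p.2).card

/-- Number of edges of `G` with exactly one endpoint in `S`. -/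
def cutEdges {V : Type*} [Fintype V] [DecidableEq V] (G : SimpleGraph V)
    [DecidableRel G.Adj] (S : Finset V) : ℕ :=
  crossEdges G S Sᶜ

/-- The equivalence relation `~_α`: `u ~_α v` iff for every `S` with `|edges_G(S)| ≤ α`,
`u ∈ S ↔ v ∈ S`. -/
def cutRel {V : Type*} [Fintype V] [DecidableEq V] (G : SimpleGraph V)
    [DecidableRel G.Adj] (α : ℕ) (u v : V) : Prop :=
  ∀ S : Finset V, cutEdges G S ≤ α → (u ∈ S ↔ v ∈ S)

instance {V : Type*} [Fintype V] [DecidableEq V] (G : SimpleGraph V)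
    [DecidableRel G.Adj] (α : ℕ) (u v : V) : Decidable (cutRel G α u v) :=
  inferInstanceAs (Decidable (∀ S : Finset V, cutEdges G S ≤ α → (u ∈ S ↔ v ∈ S)))

/-- The `~_α`-equivalence class of a vertex `v`. -/
def cutClass {V : Type*} [Fintype V] [DecidableEq V] (G : SimpleGraph V)
    [DecidableRel G.Adj] (α : ℕ) (v : V) : Finset V :=
  Finset.univ.filter fun u => cutRel G α u v

/-- The set of all `~_α`-equivalence classes. -/
def cutClasses {V : Type*} [Fintype V] [DecidableEq V] (G : SimpleGraph V)
    [DecidableRel G.Adj] (α : ℕ) : Finset (Finset V) :=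
  Finset.univ.image (cutClass G α)

section aux
variable {V : Type*} [Fintype V] [DecidableEq V] (G : SimpleGraph V) [DecidableRel G.Adj]

lemma cutEdges_compl (S : Finset V) : cutEdges G Sᶜ = cutEdges G S := by
  unfold cutEdges crossEdges
  rw [compl_compl]
  apply Finset.card_nbij' Prod.swap Prod.swap <;>
    simp +contextual [Finset.mem_filter, G.adj_comm, Set.MapsTo, Set.LeftInvOn, Set.RightInvOn]

lemma cutEdges_univ : cutEdges G (univ : Finset V) = 0 := by
  simp [cutEdges, crossEdges]

lemma cutEdges_inter (S T : Finset V) :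
    cutEdges G (S ∩ T) ≤ cutEdges G S + cutEdges G T := by
  unfold cutEdges crossEdges
  calc (((S ∩ T) ×ˢ (S ∩ T)ᶜ).filter fun p => G.Adj p.1 p.2).card
      ≤ (((S ×ˢ Sᶜ).filter fun p => G.Adj p.1 p.2) ∪
         ((T ×ˢ Tᶜ).filter fun p => G.Adj p.1 p.2)).card := by
        apply Finset.card_le_card
        intro p hp
        simp only [Finset.mem_filter, Finset.mem_product, Finset.mem_union,
          Finset.mem_compl, Finset.mem_inter] at *
        tauto
    _ ≤ _ := Finset.card_union_le _ _

lemma cutEdges_inf {ι : Type*} (s : Finset ι) (f : ι → Finset V) :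
    cutEdges G (s.inf f) ≤ ∑ i ∈ s, cutEdges G (f i) := by
  induction s using Finset.cons_induction with
  | empty => simp [cutEdges_univ, Finset.inf_empty, Finset.top_eq_univ]
  | cons a s ha ih =>
      rw [Finset.inf_cons, Finset.sum_cons]
      calc cutEdges G (f a ⊓ s.inf f) ≤ cutEdges G (f a) + cutEdges G (s.inf f) :=
            cutEdges_inter G _ _
        _ ≤ _ := by omega

lemma cutEdges_eq_sum (A : Finset V) :
    cutEdges G A = ∑ v ∈ A, (Aᶜ.filter (G.Adj v)).card := by
  unfold cutEdges crossEdges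
  rw [Finset.card_eq_sum_card_fiberwise (f := Prod.fst) (t := A)
    (fun p hp => (Finset.mem_product.1 (Finset.mem_filter.1 hp).1).1)]
  refine Finset.sum_congr rfl fun v hv => ?_
  apply Finset.card_nbij' (fun p => p.2) (fun u => (v, u)) <;>
    simp +contextual [Finset.mem_filter, Finset.mem_product, hv, Set.MapsTo, Set.LeftInvOn, Set.RightInvOn] <;>
    rintro a b ha hb hab rfl <;> exact hab

lemma degree_bound (A : Finset V) (v : V) (hv : v ∈ A) :
    G.degree v + 1 ≤ (Aᶜ.filter (G.Adj v)).card + A.card := by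
  have h1 : G.degree v = (A.filter (G.Adj v)).card + (Aᶜ.filter (G.Adj v)).card := by
    rw [← SimpleGraph.card_neighborFinset_eq_degree, SimpleGraph.neighborFinset_eq_filter]
    rw [← Finset.card_union_of_disjoint
      (Finset.disjoint_filter_filter disjoint_compl_right)]
    congr 1
    rw [← Finset.filter_union, Finset.union_compl]
  have h2 : (A.filter (G.Adj v)).card ≤ (A.erase v).card := by
    apply Finset.card_le_card
    intro u hu
    simp only [Finset.mem_filter, Finset.mem_erase] at *
    exact ⟨fun h => by subst h; exact G.irrefl hu.2, hu.1⟩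
  have h3 : (A.erase v).card + 1 = A.card := Finset.card_erase_add_one hv
  omega

lemma count_bound (c : ℕ) (A : Finset V)
    (hdeg : ∀ v : V, Fintype.card V ≤ c * (G.degree v + 1)) :
    A.card * Fintype.card V ≤ c * (A.card * A.card) + c * cutEdges G A := by
  calc A.card * Fintype.card V = ∑ _v ∈ A, Fintype.card V := by
        rw [Finset.sum_const, smul_eq_mul]
    _ ≤ ∑ v ∈ A, c * (G.degree v + 1) := Finset.sum_le_sum fun v _ => hdeg v
    _ ≤ ∑ v ∈ A, c * ((Aᶜ.filter (G.Adj v)).card + A.card) :=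
        Finset.sum_le_sum fun v hv => Nat.mul_le_mul_left c (degree_bound G A v hv)
    _ = _ := by
        simp only [Nat.mul_add]
        rw [Finset.sum_add_distrib, ← Finset.mul_sum, ← cutEdges_eq_sum,
          Finset.sum_const, smul_eq_mul]
        ring

lemma cutRel_symm {α : ℕ} {u v : V} (h : cutRel G α u v) : cutRel G α v u :=
  fun S hS => (h S hS).symm

lemma cutRel_trans {α : ℕ} {u v x : V} (h : cutRel G α u v) (h' : cutRel G α v x) :
    cutRel G α u x := fun S hS => (h S hS).trans (h' S hS)

lemma cutClass_eq_of_rel {α : ℕ} {u v : V} (h : cutRel G α u v) :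
    cutClass G α u = cutClass G α v := by
  unfold cutClass
  ext x
  simp only [Finset.mem_filter, Finset.mem_univ, true_and]
  exact ⟨fun hx => cutRel_trans G hx h, fun hx => cutRel_trans G hx (cutRel_symm G h)⟩

lemma arith (c α a n P : ℕ) (hc : 2 ≤ c) (ha : 1 ≤ a) (h1 : (c + 1) * a ≤ n)
    (h2 : c * (P * α + 1) < n) (h3 : a * n ≤ c * (a * a) + 2 * (c * c) * α)
    (hP1 : c + 1 ≤ P) (hP2 : 2 * c ≤ P) : False := by
  have hca : c * a ≤ n := le_trans (Nat.mul_le_mul_right a (by omega)) h1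
  -- b = n - c*a
  set b := n - c * a with hb
  have hrecon : c * a + b = n := by omega
  have hba : a ≤ b := by nlinarith
  have hab : a * b ≤ 2 * (c * c) * α := by nlinarith
  rcases Nat.eq_zero_or_pos α with hα | hα
  · rw [hα, Nat.mul_zero] at hab
    nlinarith
  rcases le_or_gt (c * a + c) n with hcase | hcase
  · -- a*b ≥ n - c
    have key : a * b + c ≥ n := by nlinarith
    have h2c : 2 * (c * c) * α ≤ c * P * α := by
      apply Nat.mul_le_mul_right
      calc 2 * (c * c) = c * (2 * c) := by ring
        _ ≤ c * P := Nat.mul_le_mul_left c hP2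
    nlinarith
  · have hac : a < c := by omega
    have h4 : n < c * c := by nlinarith
    have h5 : c * (c + 1) + c ≤ n := by
      calc c * (c + 1) + c ≤ c * P + c :=
            Nat.add_le_add_right (Nat.mul_le_mul_left c hP1) c
        _ ≤ c * P * α + c := Nat.add_le_add_right (Nat.le_mul_of_pos_right _ hα) c
        _ = c * (P * α + 1) := by ring
        _ ≤ n := le_of_lt h2
    nlinarith [h4, h5]

end aux

/-- if `c ≥ 2`, every vertex of `G` (on `n` vertices) has degree at least
`n/c − 1`, and `2^c·α < n/c − 1` (i.e. `c·(2^c·α + 1) < n`), then `~_α` has at most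
`c` equivalence classes. -/
theorem stmt3 {V : Type*} [Fintype V] [DecidableEq V] (G : SimpleGraph V)
    [DecidableRel G.Adj] (c α : ℕ) (hc : 2 ≤ c)
    (hdeg : ∀ v : V, Fintype.card V ≤ c * (G.degree v + 1))
    (hα : c * (2 ^ c * α + 1) < Fintype.card V) :
    (cutClasses G α).card ≤ c := by
  by_contra hcon
  push_neg at hcon
  obtain ⟨t, hts, htc⟩ := Finset.exists_subset_card_eq hcon
  -- enumeration of c+1 distinct classes
  have e : Fin (c + 1) ≃ {x // x ∈ t} := (htc ▸ t.equivFin).symm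
  have hrep : ∀ i : Fin (c + 1), ∃ v, cutClass G α v = (e i : Finset V) := by
    intro i
    have hmem : (e i : Finset V) ∈ cutClasses G α := hts (e i).2
    simpa [cutClasses, eq_comm] using hmem
  choose w hw using hrep
  have hwne : ∀ i j : Fin (c + 1), i ≠ j → ¬ cutRel G α (w i) (w j) := by
    intro i j hij hrel
    have hcc : cutClass G α (w i) = cutClass G α (w j) := cutClass_eq_of_rel G hrel
    rw [hw, hw] at hcc
    exact hij (e.injective (Subtype.ext hcc))
  -- separating sets
  have hsep : ∀ i j : Fin (c + 1), ∃ S : Finset V,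
      cutEdges G S ≤ α ∧ (i ≠ j → w i ∈ S ∧ w j ∉ S) := by
    intro i j
    by_cases hij : i = j
    · exact ⟨univ, by simp [cutEdges_univ], fun h => absurd hij h⟩
    · have h := hwne i j hij
      unfold cutRel at h
      push_neg at h
      obtain ⟨S, hS, hmem⟩ := h
      rcases hmem with ⟨h1, h2⟩ | ⟨h1, h2⟩
      · exact ⟨S, hS, fun _ => ⟨h1, h2⟩⟩
      · exact ⟨Sᶜ, by rwa [cutEdges_compl], fun _ =>
          ⟨Finset.mem_compl.2 h1, by simp [h2]⟩⟩
  choose T hT1 hT2 using hsep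
  set A : Fin (c + 1) → Finset V :=
    fun i => (univ.erase i).inf (fun j => T i j ∩ (T j i)ᶜ) with hA
  have hmemA : ∀ i, w i ∈ A i := by
    intro i
    simp only [hA]
    rw [Finset.mem_inf]
    intro j hj
    have hij : i ≠ j := (Finset.ne_of_mem_erase hj).symm
    rw [Finset.mem_inter, Finset.mem_compl]
    exact ⟨(hT2 i j hij).1, (hT2 j i hij.symm).2⟩
  have hdisj : ∀ i j : Fin (c + 1), i ≠ j → Disjoint (A i) (A j) := by
    intro i j hij
    have h1 : A i ⊆ (T j i)ᶜ := by
      intro x hx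
      simp only [hA, Finset.mem_inf] at hx
      exact (Finset.mem_inter.1 (hx j (Finset.mem_erase.2 ⟨hij.symm, Finset.mem_univ j⟩))).2
    have h2 : A j ⊆ T j i := by
      intro x hx
      simp only [hA, Finset.mem_inf] at hx
      exact (Finset.mem_inter.1 (hx i (Finset.mem_erase.2 ⟨hij, Finset.mem_univ i⟩))).1
    exact Finset.disjoint_left.2 fun x hxi hxj =>
      Finset.mem_compl.1 (h1 hxi) (h2 hxj)
  have hcutA : ∀ i, cutEdges G (A i) ≤ 2 * c * α := by
    intro i
    simp only [hA]
    calc cutEdges G ((univ.erase i).inf (fun j => T i j ∩ (T j i)ᶜ))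
        ≤ ∑ j ∈ univ.erase i, cutEdges G (T i j ∩ (T j i)ᶜ) := cutEdges_inf G _ _
      _ ≤ ∑ _j ∈ univ.erase i, (α + α) := by
          apply Finset.sum_le_sum
          intro j _
          calc cutEdges G (T i j ∩ (T j i)ᶜ)
              ≤ cutEdges G (T i j) + cutEdges G (T j i)ᶜ := cutEdges_inter G _ _
            _ ≤ α + α := by
                rw [cutEdges_compl]
                exact Nat.add_le_add (hT1 i j) (hT1 j i)
      _ = 2 * c * α := by
          rw [Finset.sum_const, Finset.card_erase_of_mem (Finset.mem_univ i),
            Finset.card_univ, Fintype.card_fin, smul_eq_mul, Nat.add_sub_cancel]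
          ring
  -- sum of sizes
  have hsum : ∑ i : Fin (c + 1), (A i).card ≤ Fintype.card V := by
    rw [← Finset.card_biUnion (fun i _ j _ hij => hdisj i j hij)]
    exact le_trans (Finset.card_le_card (Finset.subset_univ _)) (le_of_eq (Finset.card_univ))
  obtain ⟨i₀, _, hmin⟩ := Finset.exists_min_image univ (fun i => (A i).card)
    ⟨0, Finset.mem_univ 0⟩
  have hsz : (c + 1) * (A i₀).card ≤ Fintype.card V := by
    calc (c + 1) * (A i₀).card = ∑ _i : Fin (c + 1), (A i₀).card := by
          rw [Finset.sum_const, Finset.card_univ, Fintype.card_fin, smul_eq_mul]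
      _ ≤ ∑ i : Fin (c + 1), (A i).card := Finset.sum_le_sum fun i _ => hmin i (Finset.mem_univ i)
      _ ≤ _ := hsum
  have hpos : 1 ≤ (A i₀).card := Finset.card_pos.2 ⟨w i₀, hmemA i₀⟩
  have hcount := count_bound G c (A i₀) hdeg
  have hcutbd : c * cutEdges G (A i₀) ≤ 2 * (c * c) * α := by
    calc c * cutEdges G (A i₀) ≤ c * (2 * c * α) := Nat.mul_le_mul_left c (hcutA i₀)
      _ = 2 * (c * c) * α := by ring
  have h3 : (A i₀).card * Fintype.card V
      ≤ c * ((A i₀).card * (A i₀).card) + 2 * (c * c) * α := by omega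
  exact arith c α (A i₀).card (Fintype.card V) (2 ^ c) hc hpos hsz hα h3
    (by have := Nat.lt_two_pow_self (n := c); omega)
    (by
      have h := Nat.lt_two_pow_self (n := c - 1)
      have : 2 ^ c = 2 * 2 ^ (c - 1) := by
        rw [← pow_succ']
        congr 1
        omega
      omega)
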